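/- arXiv:0901.2979 — 3 statements merged into one kernel-verified Lean document; each statement's English description precedes it below -/
import Mathlib

section
/- Let R = ℤ[i][a,h] and A = R[X]/(X² - hX - a). Define ε_W : A → R by ε_W(1) = 0, ε_W(X) = -i, and Δ_W : A → A ⊗ A by Δ_W(1) = i(1⊗X + X⊗1 - h·1⊗1) and Δ_W(X) = i(X⊗X + a·1⊗1). Then (A, multiplication, unit, Δ_W, ε_W) is a commutative (hence symmetric) Frobenius algebra. -/
open TensorProduct Polynomial

noncomputable section

abbrev Rg : Type := MvPolynomial (Fin 2) GaussianInt

def iR : Rg := MvPolynomial.C ⟨0, 1⟩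
def aR : Rg := MvPolynomial.X 0
def hR : Rg := MvPolynomial.X 1

abbrev Aq : Type := AdjoinRoot ((X : Rg[X]) ^ 2 - C hR * X - C aR)

def Xa : Aq := AdjoinRoot.root _

lemma hii : iR * iR = -1 := by
  rw [iR, ← map_mul]
  have : (⟨0,1⟩ : GaussianInt) * ⟨0,1⟩ = -1 := by decide
  rw [this, map_neg, map_one]

lemma hXsq : Xa * Xa = hR • Xa + aR • (1 : Aq) := by
  have h := AdjoinRoot.eval₂_root ((X : Rg[X]) ^ 2 - C hR * X - C aR)
  simp only [eval₂_sub, eval₂_pow, eval₂_mul, eval₂_add, eval₂_X, eval₂_C, sub_sub,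
    sub_eq_zero, pow_two] at h
  rw [Xa, h, ← AdjoinRoot.algebraMap_eq, Algebra.smul_def, Algebra.smul_def, mul_one]

lemma pow_decomp (n : ℕ) : ∃ r s : Rg, Xa ^ n = r • (1:Aq) + s • Xa := by
  induction n with
  | zero => exact ⟨1, 0, by simp⟩
  | succ n ih =>
    obtain ⟨r, s, h⟩ := ih
    refine ⟨s * aR, r + s * hR, ?_⟩
    rw [pow_succ, h, add_mul, smul_mul_assoc, smul_mul_assoc, one_mul, hXsq]
    module

lemma Aq_decomp (x : Aq) : ∃ r s : Rg, x = r • (1:Aq) + s • Xa := by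
  obtain ⟨p, rfl⟩ := AdjoinRoot.mk_surjective x
  induction p using Polynomial.induction_on with
  | C c =>
    exact ⟨c, 0, by rw [AdjoinRoot.mk_C, ← AdjoinRoot.algebraMap_eq,
      Algebra.algebraMap_eq_smul_one, zero_smul, add_zero]⟩
  | add p q hp hq =>
    obtain ⟨r, s, hp⟩ := hp
    obtain ⟨r', s', hq⟩ := hq
    exact ⟨r + r', s + s', by rw [map_add, hp, hq]; module⟩
  | monomial n c _ =>
    obtain ⟨r, s, h⟩ := pow_decomp (n+1)
    refine ⟨c * r, c * s, ?_⟩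
    rw [map_mul, map_pow, AdjoinRoot.mk_C, AdjoinRoot.mk_X, ← Xa, h, ← AdjoinRoot.algebraMap_eq,
      ← Algebra.smul_def, smul_add, smul_smul, smul_smul]

set_option maxHeartbeats 2000000 in
set_option synthInstance.maxHeartbeats 400000 in
/-- with `ε_W(1)=0, ε_W(X)=-i, Δ_W(1)=i(1⊗X+X⊗1-h·1⊗1),
Δ_W(X)=i(X⊗X+a·1⊗1)`, the algebra `A = R[X]/(X²-hX-a)` is a commutative
(hence symmetric) Frobenius algebra. -/
theorem stmt_1
    (εW : Aq →ₗ[Rg] Rg) (ΔW : Aq →ₗ[Rg] Aq ⊗[Rg] Aq)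
    (hε1 : εW 1 = 0) (hεX : εW Xa = -iR)
    (hΔ1 : ΔW 1 = iR • ((1 : Aq) ⊗ₜ[Rg] Xa + Xa ⊗ₜ[Rg] (1 : Aq)
        - hR • ((1 : Aq) ⊗ₜ[Rg] (1 : Aq))))
    (hΔX : ΔW Xa = iR • (Xa ⊗ₜ[Rg] Xa + aR • ((1 : Aq) ⊗ₜ[Rg] (1 : Aq)))) :
    (∀ x y : Aq, x * y = y * x) ∧
    (∀ x y : Aq, εW (x * y) = εW (y * x)) ∧
    (∀ x y : Aq, ΔW (x * y) = (x ⊗ₜ[Rg] (1 : Aq)) * ΔW y) ∧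
    (∀ x y : Aq, ΔW (x * y) = ΔW x * ((1 : Aq) ⊗ₜ[Rg] y)) ∧
    (∀ x : Aq, (TensorProduct.assoc Rg Aq Aq Aq)
        ((TensorProduct.map ΔW (LinearMap.id : Aq →ₗ[Rg] Aq)) (ΔW x)) =
      (TensorProduct.map (LinearMap.id : Aq →ₗ[Rg] Aq) ΔW) (ΔW x)) ∧
    (∀ x : Aq, (TensorProduct.lid Rg Aq)
        ((TensorProduct.map εW (LinearMap.id : Aq →ₗ[Rg] Aq)) (ΔW x)) = x) ∧
    (∀ x : Aq, (TensorProduct.rid Rg Aq)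
        ((TensorProduct.map (LinearMap.id : Aq →ₗ[Rg] Aq) εW) (ΔW x)) = x) := by
  refine ⟨fun x y => mul_comm x y, fun x y => by rw [mul_comm x y], ?_, ?_, ?_, ?_, ?_⟩
  · intro x y
    obtain ⟨r, s, rfl⟩ := Aq_decomp x
    obtain ⟨r', s', rfl⟩ := Aq_decomp y
    simp only [mul_add, add_mul, smul_mul_assoc, mul_smul_comm, one_mul, mul_one, hXsq,
      map_add, map_smul, hΔ1, hΔX, add_tmul, tmul_add, ← smul_tmul', tmul_smul, smul_sub,
      mul_sub, sub_tmul, tmul_sub, Algebra.TensorProduct.tmul_mul_tmul, smul_add, smul_smul]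
    match_scalars <;> ring1
  · intro x y
    obtain ⟨r, s, rfl⟩ := Aq_decomp x
    obtain ⟨r', s', rfl⟩ := Aq_decomp y
    simp only [mul_add, add_mul, smul_mul_assoc, mul_smul_comm, one_mul, mul_one, hXsq,
      map_add, map_smul, hΔ1, hΔX, add_tmul, tmul_add, ← smul_tmul', tmul_smul, smul_sub,
      mul_sub, sub_mul, sub_tmul, tmul_sub, Algebra.TensorProduct.tmul_mul_tmul, smul_add,
      smul_smul]
    match_scalars <;> ring1
  · intro x
    obtain ⟨r, s, rfl⟩ := Aq_decomp x
    simp only [map_add, map_smul, map_sub, hΔ1, hΔX, TensorProduct.map_tmul,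
      LinearMap.id_coe, id_eq, assoc_tmul, tmul_add, add_tmul, tmul_sub, sub_tmul,
      tmul_smul, ← smul_tmul', smul_sub, smul_add, smul_smul]
    match_scalars <;> ring1
  · intro x
    obtain ⟨r, s, rfl⟩ := Aq_decomp x
    simp only [map_add, map_smul, map_sub, hΔ1, hΔX, TensorProduct.map_tmul,
      LinearMap.id_coe, id_eq, tmul_smul, ← smul_tmul', hε1, hεX, lid_tmul,
      smul_sub, smul_add, smul_smul]
    match_scalars <;>
      first
        | ring1
        | linear_combination (-r) * hii
        | linear_combination (-s) * hii
  · intro x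
    obtain ⟨r, s, rfl⟩ := Aq_decomp x
    simp only [map_add, map_smul, map_sub, hΔ1, hΔX, TensorProduct.map_tmul,
      LinearMap.id_coe, id_eq, tmul_smul, ← smul_tmul', hε1, hεX, rid_tmul,
      smul_sub, smul_add, smul_smul]
    match_scalars <;>
      first
        | ring1
        | linear_combination (-r) * hii
        | linear_combination (-s) * hii
end
end

section
/- Let (C, W, z, z*) be a twin Frobenius algebra in the category of modules over a commutative ring R containing i with i² = -1. Then z* : W → C is a homomorphism of coalgebra objects, i.e., (z* ⊗ z*)∘Δ_W = Δ_C∘z* and ε_C∘z* = ε_W. -/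
open TensorProduct

noncomputable section

/-- A Frobenius algebra structure on an `R`-algebra `A`: a coassociative
comultiplication `Δ` with counit `ε` satisfying the Frobenius (bimodule) condition. -/
structure FrobeniusStr (R A : Type*) [CommRing R] [Ring A] [Algebra R A] where
  Δ : A →ₗ[R] A ⊗[R] A
  ε : A →ₗ[R] R
  coassoc : ∀ x : A,
    (TensorProduct.assoc R A A A)
        ((TensorProduct.map Δ (LinearMap.id : A →ₗ[R] A)) (Δ x)) =
      (TensorProduct.map (LinearMap.id : A →ₗ[R] A) Δ) (Δ x)
  counit_left : ∀ x : A,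
    (TensorProduct.lid R A) ((TensorProduct.map ε (LinearMap.id : A →ₗ[R] A)) (Δ x)) = x
  counit_right : ∀ x : A,
    (TensorProduct.rid R A) ((TensorProduct.map (LinearMap.id : A →ₗ[R] A) ε) (Δ x)) = x
  frob_left : ∀ x y : A, Δ (x * y) = (x ⊗ₜ[R] (1 : A)) * Δ y
  frob_right : ∀ x y : A, Δ (x * y) = Δ x * ((1 : A) ⊗ₜ[R] y)

/-- A twin Frobenius algebra `(C, W, z, z*)` over `R` (with distinguished
element `I` playing the role of `i`): `C` a commutative Frobenius algebra,
`W` a symmetric Frobenius algebra, `z : C → W` an algebra homomorphism,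
`z* : W → C` its dual, satisfying duality, centrality and the isomorphism
conditions. -/
structure TwinFrobenius (R C W : Type*) [CommRing R] [CommRing C] [Ring W]
    [Algebra R C] [Algebra R W] (I : R) where
  frobC : FrobeniusStr R C
  frobW : FrobeniusStr R W
  symmW : ∀ w₁ w₂ : W, frobW.ε (w₁ * w₂) = frobW.ε (w₂ * w₁)
  z : C →ₐ[R] W
  zs : W →ₗ[R] C
  duality : ∀ (c : C) (w : W), frobC.ε (c * zs w) = frobW.ε (z c * w)
  central : ∀ (c : C) (w : W), w * z c = z c * w
  iso_left : ∀ c : C, I • zs (z c) = c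
  iso_right : ∀ w : W, z (I • zs w) = w

section UniqAux
variable {R A : Type*} [CommRing R] [Ring A] [Algebra R A]

/-- Auxiliary "double pairing" map used to prove uniqueness of the Frobenius
comultiplication. -/
def psiAux (x : A) (ε : A →ₗ[R] R) : (A ⊗[R] A) ⊗[R] (A ⊗[R] A) →ₗ[R] A ⊗[R] A :=
  (TensorProduct.map (LinearMap.mulLeft R x) LinearMap.id) ∘ₗ
  (TensorProduct.map ((TensorProduct.rid R A).toLinearMap ∘ₗ
      TensorProduct.map LinearMap.id (ε ∘ₗ LinearMap.mul' R A)) LinearMap.id) ∘ₗ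
  (TensorProduct.map (TensorProduct.assoc R A A A).toLinearMap LinearMap.id) ∘ₗ
  (TensorProduct.assoc R (A ⊗[R] A) A A).symm.toLinearMap

lemma psiAux_tmul (x : A) (ε : A →ₗ[R] R) (a b c d : A) :
    psiAux x ε ((a ⊗ₜ[R] b) ⊗ₜ[R] (c ⊗ₜ[R] d)) = ε (b * c) • ((x * a) ⊗ₜ[R] d) := by
  simp [psiAux, TensorProduct.smul_tmul', mul_smul_comm]

/-- A comultiplication satisfying the Frobenius conditions and counit laws for a
given counit `ε` is unique. -/
lemma comul_unique (ε : A →ₗ[R] R) (Δ₁ Δ₂ : A →ₗ[R] A ⊗[R] A)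
    (h1r : ∀ y : A, Δ₁ y = Δ₁ 1 * ((1:A) ⊗ₜ[R] y))
    (h1c : ∀ y : A,
      (TensorProduct.rid R A) ((TensorProduct.map (LinearMap.id : A →ₗ[R] A) ε) (Δ₁ y)) = y)
    (h1l : ∀ y : A, Δ₁ y = (y ⊗ₜ[R] (1:A)) * Δ₁ 1)
    (h2l : ∀ y : A, Δ₂ y = (y ⊗ₜ[R] (1:A)) * Δ₂ 1)
    (h2c : ∀ y : A,
      (TensorProduct.lid R A) ((TensorProduct.map ε (LinearMap.id : A →ₗ[R] A)) (Δ₂ y)) = y)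
    (x : A) : Δ₁ x = Δ₂ x := by
  set e₁ := Δ₁ 1 with he₁
  set e₂ := Δ₂ 1 with he₂
  have hK : ∀ b : A,
      (TensorProduct.lid R A) ((TensorProduct.map ε (LinearMap.id : A →ₗ[R] A))
        ((b ⊗ₜ[R] (1:A)) * e₂)) = b := by
    intro b
    rw [← h2l b]
    exact h2c b
  have hKt : ∀ c : A,
      (TensorProduct.rid R A) ((TensorProduct.map (LinearMap.id : A →ₗ[R] A) ε)
        (e₁ * ((1:A) ⊗ₜ[R] c))) = c := by
    intro c
    rw [← h1r c]
    exact h1c c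
  have stepA : ∀ (a b : A) (u : A ⊗[R] A),
      psiAux x ε ((a ⊗ₜ[R] b) ⊗ₜ[R] u)
        = (x * a) ⊗ₜ[R] ((TensorProduct.lid R A)
            ((TensorProduct.map ε (LinearMap.id : A →ₗ[R] A)) ((b ⊗ₜ[R] (1:A)) * u))) := by
    intro a b u
    induction u using TensorProduct.induction_on with
    | zero => simp
    | tmul c d => simp [psiAux_tmul, Algebra.TensorProduct.tmul_mul_tmul, smul_tmul']
    | add u v hu hv => simp [mul_add, tmul_add, hu, hv]
  have step2 : ∀ p : A ⊗[R] A, psiAux x ε (p ⊗ₜ[R] e₂) = (x ⊗ₜ[R] (1:A)) * p := by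
    intro p
    induction p using TensorProduct.induction_on with
    | zero => simp
    | tmul a b => rw [stepA a b e₂, hK b, Algebra.TensorProduct.tmul_mul_tmul, one_mul]
    | add p q hp hq => simp [add_tmul, mul_add, hp, hq]
  have stepC : ∀ (c d : A) (p : A ⊗[R] A),
      psiAux x ε (p ⊗ₜ[R] (c ⊗ₜ[R] d))
        = (x * (TensorProduct.rid R A)
            ((TensorProduct.map (LinearMap.id : A →ₗ[R] A) ε) (p * ((1:A) ⊗ₜ[R] c)))) ⊗ₜ[R] d := by
    intro c d p
    induction p using TensorProduct.induction_on with
    | zero => simp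
    | tmul a b => simp [psiAux_tmul, Algebra.TensorProduct.tmul_mul_tmul, smul_tmul',
        mul_smul_comm]
    | add p q hp hq => simp [add_tmul, add_mul, mul_add, hp, hq]
  have step4 : ∀ q : A ⊗[R] A, psiAux x ε (e₁ ⊗ₜ[R] q) = (x ⊗ₜ[R] (1:A)) * q := by
    intro q
    induction q using TensorProduct.induction_on with
    | zero => simp
    | tmul c d => rw [stepC c d e₁, hKt c, Algebra.TensorProduct.tmul_mul_tmul, one_mul]
    | add p q hp hq => simp [tmul_add, mul_add, hp, hq]
  have key := (step2 e₁).symm.trans (step4 e₂)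
  rw [h1l x, h2l x]; exact key

end UniqAux

/-- in a twin Frobenius algebra, `z*` is a homomorphism of
coalgebra objects: `(z*⊗z*)∘Δ_W = Δ_C∘z*` and `ε_C∘z* = ε_W`. -/
theorem stmt_6 {R C W : Type*} [CommRing R] [CommRing C] [Ring W]
    [Algebra R C] [Algebra R W] (I : R) (hI : I * I = -1)
    (T : TwinFrobenius R C W I) :
    (∀ w : W, (TensorProduct.map T.zs T.zs) (T.frobW.Δ w) = T.frobC.Δ (T.zs w)) ∧
    (∀ w : W, T.frobC.ε (T.zs w) = T.frobW.ε w) := by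
  -- the counit part
  have hε : ∀ w : W, T.frobC.ε (T.zs w) = T.frobW.ε w := by
    intro w
    have h := T.duality 1 w
    simpa using h
  -- z* ∘ z = -(I • ·)
  have hzsz : ∀ c : C, T.zs (T.z c) = -(I • c) := by
    intro c
    calc T.zs (T.z c) = ((-I) * I) • T.zs (T.z c) := by
          rw [neg_mul, hI, neg_neg, one_smul]
      _ = (-I) • (I • T.zs (T.z c)) := by rw [mul_smul]
      _ = (-I) • c := by rw [T.iso_left c]
      _ = -(I • c) := by rw [neg_smul]
  -- z ∘ z* = -(I • ·)
  have hzzs : ∀ w : W, T.z (T.zs w) = -(I • w) := by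
    intro w
    have h : I • T.z (T.zs w) = w := by
      rw [← map_smul]; exact T.iso_right w
    calc T.z (T.zs w) = ((-I) * I) • T.z (T.zs w) := by
          rw [neg_mul, hI, neg_neg, one_smul]
      _ = (-I) • (I • T.z (T.zs w)) := by rw [mul_smul]
      _ = (-I) • w := by rw [h]
      _ = -(I • w) := by rw [neg_smul]
  have hεz : ∀ c : C, T.frobW.ε (T.z c) = -(I • T.frobC.ε c) := by
    intro c
    rw [← hε (T.z c), hzsz c, map_neg, map_smul]
  -- the inverse algebra map φ = I • z*
  set φ : W →ₗ[R] C := I • T.zs with hφ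
  have hφz : ∀ c : C, φ (T.z c) = c := by
    intro c
    rw [hφ, LinearMap.smul_apply]
    exact T.iso_left c
  have hzφ : ∀ w : W, T.z (φ w) = w := by
    intro w
    rw [hφ, LinearMap.smul_apply, ← map_smul]
    simpa using T.iso_right w
  have hφ1 : φ 1 = 1 := by
    have h := hφz 1
    rwa [map_one] at h
  set zl : C →ₗ[R] W := T.z.toLinearMap with hzl
  -- multiplicativity of (z ⊗ z) against left multiplication by c ⊗ 1
  have hmulL : ∀ (c : C) (u : C ⊗[R] C),
      (TensorProduct.map zl zl) ((c ⊗ₜ[R] (1:C)) * u)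
        = ((T.z c) ⊗ₜ[R] (1:W)) * (TensorProduct.map zl zl) u := by
    intro c u
    induction u using TensorProduct.induction_on with
    | zero => simp
    | tmul a b => simp [hzl, Algebra.TensorProduct.tmul_mul_tmul]
    | add u v hu hv => simp [mul_add, hu, hv]
  -- counit of the transported comultiplication
  have hcounit : ∀ u : C ⊗[R] C,
      (TensorProduct.lid R W) ((TensorProduct.map T.frobW.ε (LinearMap.id : W →ₗ[R] W))
        ((TensorProduct.map zl zl) u))
      = -(I • T.z ((TensorProduct.lid R C)
          ((TensorProduct.map T.frobC.ε (LinearMap.id : C →ₗ[R] C)) u))) := by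
    intro u
    induction u using TensorProduct.induction_on with
    | zero => simp
    | tmul a b => simp [hzl, hεz, map_smul, neg_smul, smul_smul]
    | add u v hu hv => simp [hu, hv, add_comm]
  -- (z* ⊗ z*) ∘ (z ⊗ z) = -id
  have hzszs : ∀ u : C ⊗[R] C,
      (TensorProduct.map T.zs T.zs) ((TensorProduct.map zl zl) u) = -u := by
    have hnn : ∀ a b : C, (-(I • a)) ⊗ₜ[R] (-(I • b)) = -(a ⊗ₜ[R] b) := by
      intro a b
      rw [neg_tmul, tmul_neg, neg_neg, smul_tmul, smul_smul, hI, tmul_smul, neg_smul,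
        one_smul]
    intro u
    induction u using TensorProduct.induction_on with
    | zero => simp
    | tmul a b => simp only [map_tmul, hzl, AlgHom.toLinearMap_apply, hzsz, hnn]
    | add u v hu hv => simp only [map_add, hu, hv, neg_add]
  -- the transported comultiplication on W
  set Δ' : W →ₗ[R] W ⊗[R] W :=
    I • ((TensorProduct.map zl zl) ∘ₗ T.frobC.Δ ∘ₗ φ) with hΔ'
  have hΔ'app : ∀ w : W, Δ' w = I • (TensorProduct.map zl zl) (T.frobC.Δ (φ w)) := by
    intro w; rw [hΔ']; simp
  have h2l : ∀ w : W, Δ' w = (w ⊗ₜ[R] (1:W)) * Δ' 1 := by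
    intro w
    have hf := T.frobC.frob_left (φ w) 1
    rw [mul_one] at hf
    rw [hΔ'app w, hΔ'app 1, hφ1, hf, hmulL (φ w) (T.frobC.Δ 1), hzφ w, mul_smul_comm]
  have h2c : ∀ w : W,
      (TensorProduct.lid R W) ((TensorProduct.map T.frobW.ε (LinearMap.id : W →ₗ[R] W))
        (Δ' w)) = w := by
    intro w
    rw [hΔ'app w, map_smul, map_smul, hcounit, T.frobC.counit_left (φ w), hzφ w,
      smul_neg, smul_smul, hI, neg_smul, neg_neg, one_smul]
  -- uniqueness: Δ_W = Δ'
  have hDelta : ∀ w : W, T.frobW.Δ w = Δ' w := by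
    intro w
    refine comul_unique T.frobW.ε T.frobW.Δ Δ' ?_ T.frobW.counit_right ?_ h2l h2c w
    · intro y
      have h := T.frobW.frob_right 1 y
      rwa [one_mul] at h
    · intro y
      have h := T.frobW.frob_left y 1
      rwa [mul_one] at h
  constructor
  · intro w
    rw [hDelta w, hΔ'app w, map_smul, hzszs]
    have hφw : φ w = I • T.zs w := by rw [hφ]; simp
    rw [hφw, map_smul, smul_neg, smul_smul, hI, neg_smul, neg_neg, one_smul]
  · exact hε
end
end

section
/- Let S be a commutative ring containing i, n ≥ 2, C = S[x]/(xⁿ) and W = S[y]/(yⁿ) with the Frobenius structures ε_C(x^{n-1})=1, Δ_C(x^k) = Σ_{j=0}^{n-1-k} x^{j+k}⊗x^{n-1-j}, and ε_W(y^{n-1}) = -i, Δ_W(y^k) = i·Σ_{j=0}^{n-1-k} y^{j+k}⊗y^{n-1-j} (all other counit values zero). Define z : C → W by z(x^k)=y^k and z* : W → C by z*(y^k) = -i·x^k. Then (C, W, z, z*) is a twin Frobenius algebra: z is an algebra homomorphism, ε_C(c·z*(w)) = ε_W(z(c)·w), z(c)·w = w·z(c), (iz*)∘z = id_C, and z∘(iz*)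 = id_W. -/
open TensorProduct

noncomputable section

/-- The truncated polynomial algebra `S[x]/(xⁿ)`. -/
abbrev TruncPoly (S : Type) [CommRing S] (n : ℕ) : Type :=
  AdjoinRoot ((Polynomial.X : Polynomial S) ^ n)

/-- The class of `x` in `S[x]/(xⁿ)`. -/
def xTr (S : Type) [CommRing S] (n : ℕ) : TruncPoly S n := AdjoinRoot.root _


/-- Linear maps out of `TruncPoly S n` agreeing on `x^k`, `k ≤ n-1`, are equal. -/
lemma truncPoly_ext {S : Type} [CommRing S] {n : ℕ} (hn : 2 ≤ n) {M : Type}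
    [AddCommMonoid M] [Module S M] (f g : TruncPoly S n →ₗ[S] M)
    (h : ∀ k : ℕ, k ≤ n - 1 → f ((xTr S n) ^ k) = g ((xTr S n) ^ k)) : f = g := by
  have hmonic : ((Polynomial.X : Polynomial S) ^ n).Monic :=
    Polynomial.monic_X_pow n
  let pb := AdjoinRoot.powerBasis' hmonic
  apply pb.basis.ext
  intro i
  have hb : pb.basis i = (xTr S n) ^ (i : ℕ) := by
    rw [pb.basis_eq_pow]
    rfl
  rw [hb]
  apply h
  have hi : (i : ℕ) < n := by
    have h2 := i.isLt
    have hd : pb.dim ≤ n := by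
      calc ((Polynomial.X : Polynomial S) ^ n).natDegree
          ≤ n * (Polynomial.X : Polynomial S).natDegree := Polynomial.natDegree_pow_le
        _ ≤ n * 1 := Nat.mul_le_mul_left n Polynomial.natDegree_X_le
        _ = n := Nat.mul_one n
    omega
  omega

/-- with `C = S[x]/(xⁿ)` and `W = S[y]/(yⁿ)` carrying the
Frobenius structures `ε_C(x^{n-1})=1`, `Δ_C(x^k)=Σ x^{j+k}⊗x^{n-1-j}`,
`ε_W(y^{n-1})=-i`, `Δ_W(y^k)=i·Σ y^{j+k}⊗y^{n-1-j}`, the maps `z(x^k)=y^k` and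
`z*(y^k)=-i·x^k` make `(C, W, z, z*)` a twin Frobenius algebra: `z` is an
algebra homomorphism, duality, centrality, and the isomorphism conditions hold. -/
theorem stmt_10 {S : Type} [CommRing S] (I : S) (hI : I * I = -1)
    (n : ℕ) (hn : 2 ≤ n)
    (εC εW : TruncPoly S n →ₗ[S] S)
    (ΔC ΔW : TruncPoly S n →ₗ[S] TruncPoly S n ⊗[S] TruncPoly S n)
    (hεCtop : εC ((xTr S n) ^ (n - 1)) = 1)
    (hεClow : ∀ k : ℕ, k ≤ n - 2 → εC ((xTr S n) ^ k) = 0)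
    (hΔC : ∀ k : ℕ, k ≤ n - 1 → ΔC ((xTr S n) ^ k) =
      ∑ j ∈ Finset.range (n - k), ((xTr S n) ^ (j + k)) ⊗ₜ[S] ((xTr S n) ^ (n - 1 - j)))
    (hεWtop : εW ((xTr S n) ^ (n - 1)) = -I)
    (hεWlow : ∀ k : ℕ, k ≤ n - 2 → εW ((xTr S n) ^ k) = 0)
    (hΔW : ∀ k : ℕ, k ≤ n - 1 → ΔW ((xTr S n) ^ k) =
      I • ∑ j ∈ Finset.range (n - k), ((xTr S n) ^ (j + k)) ⊗ₜ[S] ((xTr S n) ^ (n - 1 - j)))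
    (z zs : TruncPoly S n →ₗ[S] TruncPoly S n)
    (hz : ∀ k : ℕ, k ≤ n - 1 → z ((xTr S n) ^ k) = (xTr S n) ^ k)
    (hzs : ∀ k : ℕ, k ≤ n - 1 → zs ((xTr S n) ^ k) = (-I) • (xTr S n) ^ k) :
    (∀ x y : TruncPoly S n, z (x * y) = z x * z y) ∧
    z 1 = 1 ∧
    (∀ (c w : TruncPoly S n), εC (c * zs w) = εW (z c * w)) ∧
    (∀ (c w : TruncPoly S n), w * z c = z c * w) ∧
    (∀ c : TruncPoly S n, I • zs (z c) = c) ∧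
    (∀ w : TruncPoly S n, z (I • zs w) = w) := by
  have hzid : ∀ a : TruncPoly S n, z a = a := by
    have : z = LinearMap.id := truncPoly_ext hn _ _ (fun k hk => by simp [hz k hk])
    intro a; rw [this]; rfl
  have hzsid : ∀ a : TruncPoly S n, zs a = (-I) • a := by
    have : zs = (-I) • LinearMap.id :=
      truncPoly_ext hn _ _ (fun k hk => by simp [hzs k hk])
    intro a; rw [this]; rfl
  have hεW : ∀ a : TruncPoly S n, εW a = (-I) • εC a := by
    have : εW = (-I) • εC := truncPoly_ext hn _ _ (fun k hk => by
      rcases Nat.lt_or_ge k (n-1) with h | h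
      · rw [hεWlow k (by omega), LinearMap.smul_apply, hεClow k (by omega)]
        simp
      · have : k = n - 1 := le_antisymm hk h
        subst this
        rw [hεWtop, LinearMap.smul_apply, hεCtop]
        simp)
    intro a; rw [this]; rfl
  refine ⟨?_, ?_, ?_, ?_, ?_, ?_⟩
  · intro x y; simp [hzid]
  · exact hzid 1
  · intro c w
    rw [hzid, hεW, hzsid, smul_eq_mul, mul_comm c (-I • w), smul_mul_assoc, map_smul,
      smul_eq_mul, mul_comm w c]
  · intro c w; exact mul_comm _ _
  · intro c
    rw [hzid, hzsid, smul_smul]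
    have : I * -I = 1 := by rw [mul_neg, hI, neg_neg]
    rw [this, one_smul]
  · intro w
    rw [hzsid, hzid, smul_smul]
    have : I * -I = 1 := by rw [mul_neg, hI, neg_neg]
    rw [this, one_smul]
end
end
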